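/- Let x_1,...,x_n be independent {0,1}-valued random variables with P(x_i = 1) ≤ 1/2 for all i, and let f = Σ_i P(x_i = 1). Then P(Σ_i x_i = 1) ≥ f·4^{-f}. -/

import Mathlib

open MeasureTheory ProbabilityTheory Finset

lemma key_ineq {p : ℝ} (hp0 : 0 ≤ p) (hp : p ≤ 1/2) : (4:ℝ) ^ (-p) ≤ 1 - p := by
  have hlog : Real.log 4 = 2 * Real.log 2 := by
    rw [show (4:ℝ) = 2^2 by norm_num, Real.log_pow]; push_cast; ring
  have h4 : (4:ℝ) ^ (-p) = Real.exp ((1 - 2*p) • (0:ℝ) + (2*p) • (-Real.log 2)) := by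
    rw [Real.rpow_def_of_pos (by norm_num : (0:ℝ) < 4)]
    congr 1
    simp [hlog, smul_eq_mul]; ring
  rw [h4]
  have := convexOn_exp.2 (Set.mem_univ (0:ℝ)) (Set.mem_univ (-Real.log 2))
    (show (0:ℝ) ≤ 1 - 2*p by linarith) (show (0:ℝ) ≤ 2*p by linarith)
    (show (1 - 2*p) + 2*p = 1 by ring)
  calc Real.exp ((1 - 2*p) • (0:ℝ) + (2*p) • (-Real.log 2))
      ≤ (1 - 2*p) • Real.exp 0 + (2*p) • Real.exp (-Real.log 2) := this
    _ = 1 - p := by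
        rw [Real.exp_zero, Real.exp_neg, Real.exp_log (by norm_num : (0:ℝ) < 2)]
        simp [smul_eq_mul]; ring


theorem exactly_one_transmit_bound {Ω : Type*} [MeasurableSpace Ω]
    (μ : Measure Ω) [IsProbabilityMeasure μ] (n : ℕ)
    (X : Fin n → Ω → ℕ) (hmeas : ∀ i, Measurable (X i))
    (h01 : ∀ i ω, X i ω = 0 ∨ X i ω = 1)
    (hind : iIndepFun X μ)
    (hhalf : ∀ i, (μ {ω | X i ω = 1}).toReal ≤ 1 / 2)
    (f : ℝ) (hf : f = ∑ i, (μ {ω | X i ω = 1}).toReal) :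
    (μ {ω | (∑ i, X i ω) = 1}).toReal ≥ f * (4 : ℝ) ^ (-f) := by
  set p : Fin n → ℝ := fun i => (μ {ω | X i ω = 1}).toReal with hp
  set A : Fin n → Set Ω := fun i => ⋂ j, {ω | X j ω = if j = i then 1 else 0} with hA
  have hmeasC : ∀ (j : Fin n) (c : ℕ), MeasurableSet {ω | X j ω = c} := by
    intro j c
    exact hmeas j (measurableSet_singleton c)
  have hAmeas : ∀ i, MeasurableSet (A i) :=
    fun i => MeasurableSet.iInter fun j => hmeasC j _
  -- set decomposition
  have hset : {ω | (∑ i, X i ω) = 1} = ⋃ i, A i := by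
    ext ω
    simp only [Set.mem_setOf_eq, Set.mem_iUnion, hA, Set.mem_iInter]
    have hsum : ∑ i, X i ω = (univ.filter (fun i => X i ω = 1)).card := by
      rw [card_filter]
      refine Finset.sum_congr rfl fun i _ => ?_
      rcases h01 i ω with h | h <;> simp [h]
    constructor
    · intro h
      rw [hsum, Finset.card_eq_one] at h
      obtain ⟨a, ha⟩ := h
      refine ⟨a, fun j => ?_⟩
      by_cases hj : j = a
      · subst hj
        have : j ∈ univ.filter (fun i => X i ω = 1) := by rw [ha]; simp
        simpa using (Finset.mem_filter.mp this).2
      · simp only [hj, if_neg]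
        have : j ∉ univ.filter (fun i => X i ω = 1) := by rw [ha]; simp [hj]
        rcases h01 j ω with h | h
        · exact h
        · exact absurd (Finset.mem_filter.mpr ⟨mem_univ j, h⟩) this
    · rintro ⟨i, hi⟩
      have : ∀ j, X j ω = if j = i then 1 else 0 := hi
      calc ∑ j, X j ω = ∑ j, if j = i then 1 else 0 := by
            exact Finset.sum_congr rfl fun j _ => this j
        _ = 1 := by simp
  -- disjointness
  have hdisj : Pairwise (Function.onFun Disjoint A) := by
    intro i i' hii'
    rw [Function.onFun, Set.disjoint_left]
    intro ω hωi hωi'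
    have h1 : X i ω = 1 := by
      have := Set.mem_iInter.mp hωi i; simpa using this
    have h0 : X i ω = 0 := by
      have := Set.mem_iInter.mp hωi' i
      simpa [hii'] using this
    omega
  -- measure of each A i
  have hAmeasval : ∀ i, μ (A i) = ∏ j, μ {ω | X j ω = if j = i then 1 else 0} := by
    intro i
    exact hind.meas_iInter fun j => ⟨{if j = i then 1 else 0}, measurableSet_singleton _, rfl⟩
  -- complement relation
  have hq : ∀ j, (μ {ω | X j ω = 0}).toReal = 1 - p j := by
    intro j
    have hc : {ω | X j ω = 0} = {ω | X j ω = 1}ᶜ := by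
      ext ω
      simp only [Set.mem_setOf_eq, Set.mem_compl_iff]
      rcases h01 j ω with h | h <;> simp [h]
    rw [hc, measure_compl (hmeasC j 1) (measure_ne_top μ _), measure_univ,
      ENNReal.toReal_sub_of_le prob_le_one ENNReal.one_ne_top, ENNReal.toReal_one]
  -- μ(A i) in reals
  have hAi : ∀ i, (μ (A i)).toReal = p i * ∏ j ∈ univ.erase i, (1 - p j) := by
    intro i
    rw [hAmeasval i, ENNReal.toReal_prod,
      ← Finset.mul_prod_erase univ _ (mem_univ i)]
    congr 1
    · simp [hp]
    · refine Finset.prod_congr rfl fun j hj => ?_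
      have : j ≠ i := (Finset.mem_erase.mp hj).1
      rw [if_neg this, hq j]
  -- main computation
  have hmain : (μ {ω | (∑ i, X i ω) = 1}).toReal
      = ∑ i, p i * ∏ j ∈ univ.erase i, (1 - p j) := by
    rw [hset, measure_iUnion hdisj hAmeas, tsum_fintype,
      ENNReal.toReal_sum (fun i _ => measure_ne_top μ _)]
    exact Finset.sum_congr rfl fun i _ => hAi i
  rw [hmain]
  -- the inequality
  have hp0 : ∀ j, 0 ≤ p j := fun j => ENNReal.toReal_nonneg
  have hterm : ∀ i, p i * (4:ℝ) ^ (-f) ≤ p i * ∏ j ∈ univ.erase i, (1 - p j) := by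
    intro i
    refine mul_le_mul_of_nonneg_left ?_ (hp0 i)
    calc (4:ℝ) ^ (-f) ≤ (4:ℝ) ^ (-(∑ j ∈ univ.erase i, p j)) := by
          apply Real.rpow_le_rpow_left_iff (by norm_num : (1:ℝ) < 4) |>.mpr
          rw [neg_le_neg_iff, hf]
          exact Finset.sum_le_sum_of_subset_of_nonneg (Finset.subset_univ _)
            (fun j _ _ => hp0 j)
      _ = ∏ j ∈ univ.erase i, (4:ℝ) ^ (-(p j)) := by
          rw [← Finset.sum_neg_distrib, Real.rpow_sum_of_pos (by norm_num : (0:ℝ) < 4)]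
      _ ≤ ∏ j ∈ univ.erase i, (1 - p j) := by
          refine Finset.prod_le_prod (fun j _ => Real.rpow_nonneg (by norm_num) _)
            (fun j _ => key_ineq (hp0 j) (hhalf j))
  calc f * (4:ℝ) ^ (-f) = ∑ i, p i * (4:ℝ) ^ (-f) := by
        rw [hf, Finset.sum_mul]
    _ ≤ ∑ i, p i * ∏ j ∈ univ.erase i, (1 - p j) := Finset.sum_le_sum fun i _ => hterm i
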